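/- Let A ∈ ℝ^{m×d} and b ∈ ℝ^m, and suppose the polytope X = {x ∈ ℝ^d : A x ≤ b} is nonempty and bounded. Let K ∈ ℝ^{d×d} and c ∈ ℝ^d. Then K x + c ∈ X for all x ∈ X if and only if there exists a matrix V ∈ ℝ^{m×m} with all entries nonnegative satisfying V A = A K and V b ≤ b − A c (inequalities between vectors are entrywise). -/

import Mathlib

open Finset

variable {ι : Type*} [Fintype ι] [DecidableEq ι]

/-- Conic Carathéodory: any nonnegative combination can be rewritten with
linearly independent support. -/
lemma caratheodory_cone {E : Type*} [AddCommGroup E] [Module ℝ E]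
    (g : ι → E) (y : ι → ℝ) (hy : ∀ i, 0 ≤ y i) :
    ∃ (s : Finset ι) (z : ι → ℝ), (∀ i, 0 ≤ z i) ∧ (∀ i ∉ s, z i = 0) ∧
      (∑ i, z i • g i = ∑ i, y i • g i) ∧
      LinearIndependent ℝ (fun i : s => g i) := by
  generalize hn : (univ.filter fun i => y i ≠ 0).card = n
  induction n using Nat.strong_induction_on generalizing y with
  | _ n ih =>
  set s : Finset ι := univ.filter fun i => y i ≠ 0 with hs
  by_cases hli : LinearIndependent ℝ (fun i : s => g i)
  · exact ⟨s, y, hy, fun i hi => by simpa [hs] using hi, rfl, hli⟩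
  · obtain ⟨f, hfsum, ⟨i₁, hi₁⟩⟩ := Fintype.not_linearIndependent_iff.mp hli
    -- d : ι → ℝ, supported in s, with ∑ d i • g i = 0 and some d i ≠ 0
    have key : ∀ d : ι → ℝ, (∀ i, y i = 0 → d i = 0) → (∑ i, d i • g i = 0) →
        (∃ i, 0 < d i) →
        ∃ (s : Finset ι) (z : ι → ℝ), (∀ i, 0 ≤ z i) ∧ (∀ i ∉ s, z i = 0) ∧
          (∑ i, z i • g i = ∑ i, y i • g i) ∧
          LinearIndependent ℝ (fun i : s => g i) := by
      intro d hd hdsum ⟨ip, hip⟩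
      set P : Finset ι := univ.filter fun i => 0 < d i with hP
      have hPne : P.Nonempty := ⟨ip, by simp [hP, hip]⟩
      obtain ⟨i₀, hi₀P, hi₀min⟩ := P.exists_min_image (fun i => y i / d i) hPne
      have hdi₀ : 0 < d i₀ := by simpa [hP] using hi₀P
      set t : ℝ := y i₀ / d i₀ with ht
      have ht0 : 0 ≤ t := div_nonneg (hy i₀) hdi₀.le
      set z : ι → ℝ := fun i => y i - t * d i with hz
      have hz0 : ∀ i, 0 ≤ z i := by
        intro i
        by_cases hdi : 0 < d i
        · have := hi₀min i (by simp [hP, hdi])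
          have : t * d i ≤ y i := by
            rw [div_le_div_iff₀ hdi₀ hdi] at this
            calc t * d i = y i₀ / d i₀ * d i := rfl
            _ ≤ y i := by
              rw [div_mul_eq_mul_div, div_le_iff₀ hdi₀]
              linarith [this]
          simpa [hz] using by linarith
        · have : t * d i ≤ 0 := mul_nonpos_of_nonneg_of_nonpos ht0 (not_lt.mp hdi)
          simp only [hz]
          linarith [hy i]
      have hzy : ∀ i, y i = 0 → z i = 0 := by
        intro i hyi; simp [hz, hyi, hd i hyi]
      have hzi₀ : z i₀ = 0 := by
        simp [hz, ht]; field_simp; ring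
      have hyi₀ : y i₀ ≠ 0 := fun h => by
        have := hd i₀ h; rw [this] at hdi₀; exact lt_irrefl 0 hdi₀
      have hsum : ∑ i, z i • g i = ∑ i, y i • g i := by
        simp only [hz, sub_smul, Finset.sum_sub_distrib, mul_smul]
        rw [← Finset.smul_sum, hdsum, smul_zero, sub_zero]
      have hcard : (univ.filter fun i => z i ≠ 0).card < n := by
        rw [← hn]
        apply Finset.card_lt_card
        constructor
        · intro i hi
          simp only [mem_filter, mem_univ, true_and] at hi
          simp only [hs, mem_filter, mem_univ, true_and]
          exact fun h => hi (hzy i h)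
        · intro hsub
          have := hsub (by simp [hyi₀] : i₀ ∈ univ.filter fun i => y i ≠ 0)
          simp [hzi₀] at this
      obtain ⟨s', z', h1, h2, h3, h4⟩ := ih _ hcard z hz0 rfl
      exact ⟨s', z', h1, h2, h3.trans hsum, h4⟩
    -- build d from f
    classical
    set d : ι → ℝ := fun i => if h : i ∈ s then f ⟨i, h⟩ else 0 with hd
    have hdsupp : ∀ i, y i = 0 → d i = 0 := by
      intro i hyi
      have : i ∉ s := by simp [hs, hyi]
      simp [hd, this]
    have hdsum : ∑ i, d i • g i = 0 := by
      rw [← Finset.sum_subset (Finset.subset_univ s)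
        (fun i _ hi => by simp [hd, hi] : ∀ i ∈ univ, i ∉ s → d i • g i = 0)]
      rw [← Finset.sum_coe_sort s (fun i => d i • g i), ← hfsum]
      refine Finset.sum_congr rfl fun i _ => ?_
      simp [hd, i.2]
    have hdne : d i₁ ≠ 0 := by simp [hd, i₁.2, hi₁]
    rcases lt_or_gt_of_ne hdne with h | h
    · refine key (fun i => -d i) (fun i hi => by simp [hdsupp i hi]) ?_
        ⟨(i₁ : ι), neg_pos.mpr h⟩
      simp only [neg_smul, Finset.sum_neg_distrib, hdsum, neg_zero]
    · exact key d hdsupp hdsum ⟨(i₁ : ι), h⟩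

/-- A finitely generated cone in a finite-dimensional real normed space is closed. -/
lemma isClosed_finitely_generated_cone {E : Type*} [NormedAddCommGroup E]
    [NormedSpace ℝ E] [FiniteDimensional ℝ E] (g : ι → E) :
    IsClosed {v : E | ∃ y : ι → ℝ, (∀ i, 0 ≤ y i) ∧ v = ∑ i, y i • g i} := by
  classical
  have hT : ∀ s : Finset ι, LinearIndependent ℝ (fun i : s => g i) →
      IsClosed {v : E | ∃ y : {i : ι // i ∈ s} → ℝ, (∀ i, 0 ≤ y i) ∧
        v = ∑ i, y i • g i.1} := by
    intro s hli
    let L : ({i : ι // i ∈ s} → ℝ) →ₗ[ℝ] E :=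
      { toFun := fun y => ∑ i, y i • g i.1
        map_add' := by
          intro a b; simp [add_smul, Finset.sum_add_distrib]
        map_smul' := by
          intro c a; simp [smul_smul, Finset.smul_sum] }
    have hker : LinearMap.ker L = ⊥ := by
      rw [LinearMap.ker_eq_bot']
      intro y hy
      funext i
      exact Fintype.linearIndependent_iff.mp hli y hy i
    have hemb := LinearMap.isClosedEmbedding_of_injective hker
    have : {v : E | ∃ y : {i : ι // i ∈ s} → ℝ, (∀ i, 0 ≤ y i) ∧
        v = ∑ i, y i • g i.1} =
        L '' {y | ∀ i, 0 ≤ y i} := by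
      ext v
      constructor
      · rintro ⟨y, hy, rfl⟩; exact ⟨y, hy, rfl⟩
      · rintro ⟨y, hy, rfl⟩; exact ⟨y, hy, rfl⟩
    rw [this]
    apply hemb.isClosedMap
    have : {y : s → ℝ | ∀ i, 0 ≤ y i} = ⋂ i, {y | 0 ≤ y i} := by
      ext y; simp [Set.mem_iInter]
    rw [this]
    exact isClosed_iInter fun i => isClosed_le continuous_const (continuous_apply i)
  have hunion : {v : E | ∃ y : ι → ℝ, (∀ i, 0 ≤ y i) ∧ v = ∑ i, y i • g i} =
      ⋃ s : {s : Finset ι // LinearIndependent ℝ (fun i : s => g i)},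
        {v : E | ∃ y : {i : ι // i ∈ s.1} → ℝ, (∀ i, 0 ≤ y i) ∧
          v = ∑ i, y i • g i.1} := by
    ext v
    simp only [Set.mem_iUnion, Set.mem_setOf_eq]
    constructor
    · rintro ⟨y, hy, rfl⟩
      obtain ⟨s, z, hz0, hzs, hzsum, hzli⟩ := caratheodory_cone g y hy
      refine ⟨⟨s, hzli⟩, fun i => z i.1, fun i => hz0 i.1, ?_⟩
      rw [← hzsum]
      exact ((Finset.sum_subset (Finset.subset_univ s)
        (fun i _ hi => by simp [hzs i hi])).symm.trans
        (Finset.sum_coe_sort s (fun i => z i • g i)).symm)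
    · rintro ⟨⟨s, hli⟩, y, hy, rfl⟩
      refine ⟨fun i => if h : i ∈ s then y ⟨i, h⟩ else 0, fun i => ?_, ?_⟩
      · by_cases h : i ∈ s <;> simp [h, hy]
      · rw [← Finset.sum_subset (Finset.subset_univ s)
          (fun i _ hi => by simp [hi] : ∀ i ∈ Finset.univ, i ∉ s →
            (if h : i ∈ s then y ⟨i, h⟩ else 0) • g i = 0),
          ← Finset.sum_coe_sort s]
        exact Finset.sum_congr rfl fun i _ => by simp [i.2]
  rw [hunion]
  exact isClosed_iUnion_of_finite fun s => hT s s.2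

open scoped RealInnerProductSpace in
/-- Affine Farkas lemma. -/
lemma farkas_affine {d m : ℕ} (A : Matrix (Fin m) (Fin d) ℝ) (b : Fin m → ℝ)
    (hne : {x : Fin d → ℝ | A.mulVec x ≤ b}.Nonempty)
    (g : Fin d → ℝ) (β : ℝ)
    (h : ∀ x : Fin d → ℝ, A.mulVec x ≤ b → ∑ j, g j * x j ≤ β) :
    ∃ y : Fin m → ℝ, (∀ i, 0 ≤ y i) ∧ (∀ j, ∑ i, y i * A i j = g j) ∧
      ∑ i, y i * b i ≤ β := by
  classical
  -- generators of the cone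
  set G : Option (Fin m) → EuclideanSpace ℝ (Option (Fin d)) := fun k => WithLp.toLp 2 (
    Option.elim k (fun o => Option.elim o 1 (fun _ => 0))
      (fun i => fun o => Option.elim o (b i) (fun j => A i j)) : Option (Fin d) → ℝ) with hG
  set C : Set (EuclideanSpace ℝ (Option (Fin d))) := {v | ∃ y : Option (Fin m) → ℝ, (∀ k, 0 ≤ y k) ∧
    v = ∑ k, y k • G k} with hC
  set v : EuclideanSpace ℝ (Option (Fin d)) := WithLp.toLp 2 (fun o => Option.elim o β g) with hv
  -- component formula
  have comp : ∀ (y : Option (Fin m) → ℝ) (o : Option (Fin d)),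
      (∑ k, y k • G k) o = ∑ k, y k * G k o := by
    intro y o
    rw [WithLp.ofLp_sum, Finset.sum_apply]
    rfl
  have hvC : v ∈ C := by
    by_contra hvC
    -- C is a closed convex cone
    have hCcone : ∃ K : ConvexCone ℝ (EuclideanSpace ℝ (Option (Fin d))), (K : Set (EuclideanSpace ℝ (Option (Fin d)))) = C := by
      refine ⟨⟨C, ?_, ?_⟩, rfl⟩
      · rintro t ht x ⟨y, hy, rfl⟩
        exact ⟨fun k => t * y k, fun k => mul_nonneg ht.le (hy k), by
          simp [Finset.smul_sum, mul_smul]⟩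
      · rintro x ⟨y, hy, rfl⟩ x' ⟨y', hy', rfl⟩
        exact ⟨fun k => y k + y' k, fun k => add_nonneg (hy k) (hy' k), by
          simp [add_smul, Finset.sum_add_distrib]⟩
    obtain ⟨Kc, hKc⟩ := hCcone
    have hclosed : IsClosed (Kc : Set (EuclideanSpace ℝ (Option (Fin d)))) := by
      rw [hKc]
      exact isClosed_finitely_generated_cone G
    have hCne : (Kc : Set (EuclideanSpace ℝ (Option (Fin d)))).Nonempty := by
      rw [hKc]
      exact ⟨0, fun k => 0, fun k => le_refl 0, by simp⟩
    have hdisj : v ∉ Kc := by rw [← SetLike.mem_coe, hKc]; exact hvC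
    have hpt : Kc.Pointed := by
      rw [ConvexCone.Pointed, ← SetLike.mem_coe, hKc]
      exact ⟨fun k => 0, fun k => le_refl 0, by simp⟩
    obtain ⟨z, hz1', hz2'⟩ := ProperCone.hyperplane_separation'
      ({ toSubmodule := Kc.toPointedCone hpt, isClosed' := hclosed } : ProperCone ℝ _) hdisj
    have hz1 : ∀ x ∈ Kc, 0 ≤ ⟪x, z⟫ := fun x hx => hz1' x hx
    have hz2 : ⟪z, v⟫ < 0 := by rw [real_inner_comm]; exact hz2'
    -- each generator lies in C
    have hGC : ∀ k, 0 ≤ ⟪G k, z⟫ := by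
      intro k
      apply hz1
      rw [← SetLike.mem_coe, hKc]
      refine ⟨fun k' => if k' = k then 1 else 0, fun k' => by positivity, ?_⟩
      simp [ite_smul]
    have hinner : ∀ w : EuclideanSpace ℝ (Option (Fin d)), ⟪w, z⟫ = ∑ o, w o * z o := fun w => by
      simp [PiLp.inner_apply, RCLike.inner_apply, Fintype.sum_option, mul_comm]
    set t : ℝ := z none with htdef
    have ht : 0 ≤ t := by
      have := hGC none
      rw [hinner] at this
      simpa [hG, Fintype.sum_option] using this
    have hrow : ∀ i, 0 ≤ b i * t + ∑ j, A i j * z (some j) := by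
      intro i
      have := hGC (some i)
      rw [hinner] at this
      simpa [hG, Fintype.sum_option] using this
    have hneg : β * t + ∑ j, g j * z (some j) < 0 := by
      have := hz2
      rw [real_inner_comm, hinner] at this
      simpa [hv, Fintype.sum_option] using this
    rcases lt_or_eq_of_le ht with htpos | htzero
    · -- t > 0 : the point -z/t is feasible and violates h
      set x : Fin d → ℝ := fun j => -(z (some j)) / t with hx
      have hfeas : A.mulVec x ≤ b := by
        intro i
        have h1 := hrow i
        have : A.mulVec x i = (-(∑ j, A i j * z (some j))) / t := by
          simp [Matrix.mulVec, dotProduct, hx, div_eq_mul_inv, Finset.sum_mul,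
            neg_mul, Finset.sum_neg_distrib, mul_assoc]
        rw [this, div_le_iff₀ htpos]
        nlinarith
      have h2 := h x hfeas
      have : ∑ j, g j * x j = (-(∑ j, g j * z (some j))) / t := by
        simp [hx, div_eq_mul_inv, Finset.sum_mul, neg_mul,
          Finset.sum_neg_distrib, mul_assoc]
      rw [this, div_le_iff₀ htpos] at h2
      nlinarith
    · -- t = 0 : unboundedness contradiction
      obtain ⟨x₀, hx₀⟩ := hne
      have hAz : ∀ i, 0 ≤ ∑ j, A i j * z (some j) := by
        intro i; have := hrow i; rw [← htzero] at this; linarith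
      have hq : ∑ j, g j * z (some j) < 0 := by
        rw [← htzero] at hneg; linarith
      set q : ℝ := ∑ j, g j * z (some j) with hqdef
      set s : ℝ := (β - ∑ j, g j * x₀ j + 1) / (-q) with hsdef
      have hs0 : 0 ≤ s := by
        apply div_nonneg _ (by linarith)
        have := h x₀ hx₀
        linarith
      have hfeas : A.mulVec (fun j => x₀ j - s * z (some j)) ≤ b := by
        intro i
        have hkey : A.mulVec (fun j => x₀ j - s * z (some j)) i =
            A.mulVec x₀ i - s * ∑ j, A i j * z (some j) := by
          simp only [Matrix.mulVec, dotProduct, mul_sub, Finset.sum_sub_distrib]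
          congr 1
          rw [Finset.mul_sum]
          exact Finset.sum_congr rfl fun j _ => by ring
        rw [hkey]
        have := hx₀ i
        nlinarith [hAz i, mul_nonneg hs0 (hAz i)]
      have := h _ hfeas
      have hexp : ∑ j, g j * (x₀ j - s * z (some j)) =
          ∑ j, g j * x₀ j - s * q := by
        simp only [mul_sub, Finset.sum_sub_distrib]
        congr 1
        rw [hqdef, Finset.mul_sum]
        exact Finset.sum_congr rfl fun j _ => by ring
      rw [hexp] at this
      have hq' : q ≠ 0 := ne_of_lt hq
      have hsq : s * q = -(β - ∑ j, g j * x₀ j + 1) := by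
        rw [hsdef, div_mul_eq_mul_div, div_eq_iff (neg_ne_zero.mpr hq')]
        ring
      rw [hsq] at this
      linarith
  -- extract coefficients
  obtain ⟨y, hy, hsum⟩ := hvC
  refine ⟨fun i => y (some i), fun i => hy (some i), ?_, ?_⟩
  · intro j
    have := congrFun (congrArg WithLp.ofLp hsum) (some j)
    rw [comp] at this
    simp only [WithLp.ofLp_toLp, hv, hG, Fintype.sum_option, Option.elim] at this
    simpa [mul_comm] using this.symm
  · have := congrFun (congrArg WithLp.ofLp hsum) none
    rw [comp] at this
    simp only [WithLp.ofLp_toLp, hv, hG, Fintype.sum_option, Option.elim] at this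
    have hy0 := hy none
    have h2 : β = y none * 1 + ∑ i, y (some i) * b i := by simpa using this
    rw [mul_one] at h2
    linarith

/-- **Characterization of affine endomorphisms of a polytope**
(Theorem `explicit-repres`): let `X = {x ∈ ℝ^d : A x ≤ b}` be a nonempty bounded polytope.
Then `K x + c ∈ X` for all `x ∈ X` if and only if there is an entrywise nonnegative matrix
`V ∈ ℝ^{m×m}` with `V A = A K` and `V b ≤ b − A c` (entrywise). -/
theorem affine_endomorphism_characterization {d m : ℕ}
    (A : Matrix (Fin m) (Fin d) ℝ) (b : Fin m → ℝ)
    (hne : {x : Fin d → ℝ | A.mulVec x ≤ b}.Nonempty)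
    (hbd : ∃ R : ℝ, ∀ x ∈ {x : Fin d → ℝ | A.mulVec x ≤ b}, ∀ i, |x i| ≤ R)
    (K : Matrix (Fin d) (Fin d) ℝ) (c : Fin d → ℝ) :
    (∀ x : Fin d → ℝ, A.mulVec x ≤ b → A.mulVec (K.mulVec x + c) ≤ b) ↔
    ∃ V : Matrix (Fin m) (Fin m) ℝ,
      (∀ i j, 0 ≤ V i j) ∧ V * A = A * K ∧ V.mulVec b ≤ b - A.mulVec c := by
  constructor
  · intro h
    have hrow : ∀ i : Fin m, ∃ y : Fin m → ℝ, (∀ k, 0 ≤ y k) ∧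
        (∀ j, ∑ k, y k * A k j = (A * K) i j) ∧
        ∑ k, y k * b k ≤ b i - A.mulVec c i := by
      intro i
      apply farkas_affine A b hne
      intro x hx
      have h1 := h x hx i
      have h2 : A.mulVec (K.mulVec x + c) i =
          ∑ j, (A * K) i j * x j + A.mulVec c i := by
        rw [Matrix.mulVec_add]
        rw [show A.mulVec (K.mulVec x) = (A * K).mulVec x from Matrix.mulVec_mulVec ..]
        simp [Matrix.mulVec, dotProduct]
      rw [h2] at h1
      linarith
    choose y hy0 hyA hyb using hrow
    refine ⟨fun i k => y i k, fun i k => hy0 i k, ?_, ?_⟩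
    · ext i j
      exact Matrix.mul_apply.trans (hyA i j)
    · intro i
      simpa [Matrix.mulVec, dotProduct] using hyb i
  · rintro ⟨V, hV0, hVA, hVb⟩ x hx i
    have h1 : A.mulVec (K.mulVec x + c) i =
        V.mulVec (A.mulVec x) i + A.mulVec c i := by
      rw [Matrix.mulVec_add]
      rw [show A.mulVec (K.mulVec x) = (A * K).mulVec x from Matrix.mulVec_mulVec ..]
      rw [← hVA]
      rw [show (V * A).mulVec x = V.mulVec (A.mulVec x) from (Matrix.mulVec_mulVec ..).symm]
      simp
    rw [h1]
    have h2 : V.mulVec (A.mulVec x) i ≤ V.mulVec b i := by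
      simp only [Matrix.mulVec, dotProduct]
      apply Finset.sum_le_sum
      intro k _
      exact mul_le_mul_of_nonneg_left (hx k) (hV0 i k)
    have h3 := hVb i
    simp only [Pi.sub_apply] at h3
    linarith
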